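/- arXiv:2209.13318 — 4 statements merged into one kernel-verified Lean document; each statement's English description precedes it below -/
import Mathlib

section
/- The set of solution supervisors is closed under arbitrary union: if every supervisor S_j in a family satisfies L_a(S_j^a/G) = K, then the pointwise union ∪S_j also satisfies L_a((∪S_j)^a/G) = K. -/
/-- The large language `L_a(S^a/G)` of the supervised system under cyber attacks,
with enabling condition `σ ∈ Euc ∪ Eca ∨ ∃ t ∈ Φ s, σ ∈ S t`. -/
inductive LargeLang {α : Type*} (LG : Set (List α)) (Euc Eca : Set α)
    (Φ : List α → Set (List α)) (S : List α → Set α) : List α → Prop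
  | nil : LargeLang LG Euc Eca Φ S []
  | snoc (s : List α) (σ : α) :
      LargeLang LG Euc Eca Φ S s → s ++ [σ] ∈ LG →
      (σ ∈ Euc ∪ Eca ∨ ∃ t ∈ Φ s, σ ∈ S t) →
      LargeLang LG Euc Eca Φ S (s ++ [σ])

/-- The set of solution supervisors is closed under arbitrary union. -/
theorem stmt_13 {α ι : Type*} [Nonempty ι] (LG K : Set (List α)) (Euc Eca : Set α)
    (Φ : List α → Set (List α)) (S : ι → List α → Set α)
    (hKL : K ⊆ LG) (hKne : K.Nonempty)
    (hK : ∀ s ∈ K, ∀ s' : List α, s' <+: s → s' ∈ K)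
    (hLG : ∀ s ∈ LG, ∀ s' : List α, s' <+: s → s' ∈ LG)
    (hsol : ∀ j, {s : List α | LargeLang LG Euc Eca Φ (S j) s} = K) :
    {s : List α | LargeLang LG Euc Eca Φ (fun t => ⋃ i, S i t) s} = K := by
  have mono : ∀ (j : ι) (s : List α), LargeLang LG Euc Eca Φ (S j) s →
      LargeLang LG Euc Eca Φ (fun t => ⋃ i, S i t) s := by
    intro j s h
    induction h with
    | nil => exact .nil
    | snoc s σ _ hmem hen ih =>
      refine .snoc s σ ih hmem ?_
      rcases hen with h | ⟨t, ht, hσ⟩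
      · exact Or.inl h
      · exact Or.inr ⟨t, ht, Set.mem_iUnion.2 ⟨j, hσ⟩⟩
  obtain ⟨j₀⟩ := ‹Nonempty ι›
  ext s
  simp only [Set.mem_setOf_eq]
  constructor
  · intro h
    induction h with
    | nil =>
      obtain ⟨w, hw⟩ := hKne
      exact hK w hw [] ⟨w, rfl⟩
    | snoc s σ _ hmem hen ih =>
      rcases hen with h | ⟨t, ht, hσ⟩
      · have hs : LargeLang LG Euc Eca Φ (S j₀) s :=
          ((Set.ext_iff.1 (hsol j₀)) s).2 ih
        have : LargeLang LG Euc Eca Φ (S j₀) (s ++ [σ]) :=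
          .snoc s σ hs hmem (Or.inl h)
        exact ((Set.ext_iff.1 (hsol j₀)) _).1 this
      · obtain ⟨i, hσi⟩ := Set.mem_iUnion.1 hσ
        have hs : LargeLang LG Euc Eca Φ (S i) s :=
          ((Set.ext_iff.1 (hsol i)) s).2 ih
        have : LargeLang LG Euc Eca Φ (S i) (s ++ [σ]) :=
          .snoc s σ hs hmem (Or.inr ⟨t, ht, hσi⟩)
        exact ((Set.ext_iff.1 (hsol i)) _).1 this
  · intro hs
    have : LargeLang LG Euc Eca Φ (S j₀) s := ((Set.ext_iff.1 (hsol j₀)) s).2 hs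
    exact mono j₀ s this
end

section
/- Necessity of CA-observability: if K is CA-controllable and there exists a supervisor S with L_a(S^a/G) = K, then K is CA-observable with respect to Φ^π. -/
/-- Necessity of CA-observability: if `K` is CA-controllable and some
supervisor achieves `L_a(S^a/G) = K`, then `K` is CA-observable w.r.t. `Φ^π`. -/
theorem stmt_16 {α : Type*} (LG K : Set (List α)) (Euc Eca : Set α)
    (Φ : List α → Set (List α))
    (hKL : K ⊆ LG) (hKne : K.Nonempty)
    (hK : ∀ s ∈ K, ∀ s' : List α, s' <+: s → s' ∈ K)
    (hLG : ∀ s ∈ LG, ∀ s' : List α, s' <+: s → s' ∈ LG)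
    (hΦne : ∀ s ∈ LG, (Φ s).Nonempty)
    (hctrl : ∀ s ∈ K, ∀ σ ∈ Euc ∪ Eca, s ++ [σ] ∈ LG → s ++ [σ] ∈ K)
    (hsol : ∃ S : List α → Set α,
      {s : List α | LargeLang LG Euc Eca Φ S s} = K) :
    ∀ s : List α, ∀ σ : α, s ++ [σ] ∈ K →
      ∃ t ∈ Φ s, ∀ s' : List α, t ∈ Φ s' →
        s' ∈ K → s' ++ [σ] ∈ LG → s' ++ [σ] ∈ K := by
  obtain ⟨S, hS⟩ := hsol
  intro s σ hsσ
  have hmem : LargeLang LG Euc Eca Φ S (s ++ [σ]) := by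
    rw [← hS] at hsσ; exact hsσ
  have hs : s ∈ K := hK _ hsσ s ⟨[σ], rfl⟩
  -- invert the last step
  have hcond : σ ∈ Euc ∪ Eca ∨ ∃ t ∈ Φ s, σ ∈ S t := by
    generalize heq : s ++ [σ] = u at hmem
    cases hmem with
    | nil => simp at heq
    | snoc s' σ' h1 h2 h3 =>
      obtain ⟨rfl, h⟩ := List.append_inj' heq rfl
      obtain rfl : σ = σ' := by simpa using h
      exact h3
  rcases hcond with h | ⟨t, ht, hσt⟩
  · obtain ⟨t, ht⟩ := hΦne s (hKL hs)
    exact ⟨t, ht, fun s' _ hs' hLG' => hctrl s' hs' σ h hLG'⟩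
  · refine ⟨t, ht, fun s' ht' hs' hLG' => ?_⟩
    have hmem' : LargeLang LG Euc Eca Φ S s' := by
      rw [← hS] at hs'; exact hs'
    have : LargeLang LG Euc Eca Φ S (s' ++ [σ]) :=
      LargeLang.snoc s' σ hmem' hLG' (Or.inr ⟨t, ht', hσt⟩)
    rw [← hS]; exact this
end

section
/- Sufficiency: if K ⊆ L(G) is nonempty, prefix-closed, CA-controllable, and CA-observable with respect to Φ^π, then the state-estimate-based supervisor S_CA defined by S_CA(t) = (Σ \ η(t)) ∪ Σ_uc for t ∈ Φ^π(K) (where η(t) = {σ : ∃ s' ∈ K, t ∈ Φ^π(s'), s'σ ∈ L(G) \ K}) and S_CA(t) = Σ_uc otherwise, satisfies L_a(S_CA^a/G) = K. -/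
open Classical in
/-- Sufficiency: if `K` is nonempty, prefix-closed, CA-controllable and
CA-observable, then the state-estimate-based supervisor `S_CA` achieves
`L_a(S_CA^a/G) = K`. Here `η t` is the set of events that could lead out of `K` from
some string consistent with the observation `t`, and
`S_CA t = (Σ \ η t) ∪ Euc` for `t ∈ Φ^π(K)`, `S_CA t = Euc` otherwise. -/
theorem stmt_17 {α : Type*} (LG K : Set (List α)) (Euc Eca : Set α)
    (Φ : List α → Set (List α))
    (hKL : K ⊆ LG) (hKne : K.Nonempty)
    (hK : ∀ s ∈ K, ∀ s' : List α, s' <+: s → s' ∈ K)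
    (hLG : ∀ s ∈ LG, ∀ s' : List α, s' <+: s → s' ∈ LG)
    (hΦne : ∀ s ∈ LG, (Φ s).Nonempty)
    (hctrl : ∀ s ∈ K, ∀ σ ∈ Euc ∪ Eca, s ++ [σ] ∈ LG → s ++ [σ] ∈ K)
    (hobs : ∀ s : List α, ∀ σ : α, s ++ [σ] ∈ K →
      ∃ t ∈ Φ s, ∀ s' : List α, t ∈ Φ s' →
        s' ∈ K → s' ++ [σ] ∈ LG → s' ++ [σ] ∈ K)
    (η : List α → Set α)
    (hη : ∀ t : List α,
      η t = {σ : α | ∃ s' ∈ K, t ∈ Φ s' ∧ s' ++ [σ] ∈ LG ∧ s' ++ [σ] ∉ K})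
    (SCA : List α → Set α)
    (hSCA : ∀ t : List α,
      SCA t = if t ∈ ⋃ s ∈ K, Φ s then (η t)ᶜ ∪ Euc else Euc) :
    {s : List α | LargeLang LG Euc Eca Φ SCA s} = K := by
  have hnil : [] ∈ K := by
    obtain ⟨w, hw⟩ := hKne
    exact hK w hw [] ⟨w, rfl⟩
  ext s
  simp only [Set.mem_setOf_eq]
  constructor
  · intro h
    induction h with
    | nil => exact hnil
    | snoc s σ _ hmem henb ih =>
      rcases henb with h1 | ⟨t, ht, hσ⟩
      · exact hctrl s ih σ h1 hmem
      · rw [hSCA] at hσ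
        have htU : t ∈ ⋃ s ∈ K, Φ s := Set.mem_biUnion ih ht
        rw [if_pos htU] at hσ
        rcases hσ with hσ | hσ
        · by_contra hnk
          exact hσ ((hη t) ▸ ⟨s, ih, ht, hmem, hnk⟩)
        · exact hctrl s ih σ (Or.inl hσ) hmem
  · intro h
    induction s using List.reverseRecOn with
    | nil => exact LargeLang.nil
    | append_singleton s σ ih =>
      have hs : s ∈ K := hK _ h s ⟨[σ], rfl⟩
      have hL : s ++ [σ] ∈ LG := hKL h
      refine LargeLang.snoc s σ (ih hs) hL ?_
      obtain ⟨t, ht, hprop⟩ := hobs s σ h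
      refine Or.inr ⟨t, ht, ?_⟩
      rw [hSCA, if_pos (Set.mem_biUnion hs ht)]
      left
      rw [hη]
      rintro ⟨s', hs', ht', hL', hnk⟩
      exact hnk (hprop s' ht' hs' hL')
end

section
/- Maximal permissiveness of S_CA: if some supervisor S satisfies L_a(S^a/G) = K, then the state-estimate-based supervisor S_CA (which disables exactly the events that could lead out of K from some state consistent with the observation) also satisfies L_a(S_CA^a/G) = K, and for every supervisor S' with L_a(S'^a/G) = K and every observation t ∈ Φ^π(K), S'(t) ⊆ S_CA(t). -/
open Classical in
/-- Maximal permissiveness of `S_CA`: if some supervisor solves the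
problem, then `S_CA` solves it too, and every solution supervisor `S'` is pointwise
less permissive than `S_CA` on observations in `Φ^π(K)`. -/
theorem stmt_18 {α : Type*} (LG K : Set (List α)) (Euc Eca : Set α)
    (Φ : List α → Set (List α))
    (hKL : K ⊆ LG) (hKne : K.Nonempty)
    (hK : ∀ s ∈ K, ∀ s' : List α, s' <+: s → s' ∈ K)
    (hLG : ∀ s ∈ LG, ∀ s' : List α, s' <+: s → s' ∈ LG)
    (hΦne : ∀ s ∈ LG, (Φ s).Nonempty)
    (η : List α → Set α)
    (hη : ∀ t : List α,
      η t = {σ : α | ∃ s' ∈ K, t ∈ Φ s' ∧ s' ++ [σ] ∈ LG ∧ s' ++ [σ] ∉ K})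
    (SCA : List α → Set α)
    (hSCA : ∀ t : List α,
      SCA t = if t ∈ ⋃ s ∈ K, Φ s then (η t)ᶜ ∪ Euc else Euc)
    (hsol : ∃ S : List α → Set α,
      {s : List α | LargeLang LG Euc Eca Φ S s} = K) :
    {s : List α | LargeLang LG Euc Eca Φ SCA s} = K ∧
      ∀ S' : List α → Set α,
        {s : List α | LargeLang LG Euc Eca Φ S' s} = K →
          ∀ t ∈ ⋃ s ∈ K, Φ s, S' t ⊆ SCA t := by

  obtain ⟨S, hS⟩ := hsol
  -- generic step lemma: any supervisor with large language K closes K under enabled steps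
  have hstepG : ∀ (T : List α → Set α),
      {s : List α | LargeLang LG Euc Eca Φ T s} = K →
      ∀ s ∈ K, ∀ σ : α, s ++ [σ] ∈ LG →
      (σ ∈ Euc ∪ Eca ∨ ∃ t ∈ Φ s, σ ∈ T t) → s ++ [σ] ∈ K := by
    intro T hT s hs σ hlg hen
    have hm : ∀ u : List α, LargeLang LG Euc Eca Φ T u ↔ u ∈ K :=
      fun u => Set.ext_iff.mp hT u
    exact (hm _).mp (LargeLang.snoc s σ ((hm s).mpr hs) hlg hen)
  have hstep := hstepG S hS
  -- inversion lemma
  have inv : ∀ (T : List α → Set α) (s : List α) (σ : α),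
      LargeLang LG Euc Eca Φ T (s ++ [σ]) →
      σ ∈ Euc ∪ Eca ∨ ∃ t ∈ Φ s, σ ∈ T t := by
    intro T s σ h
    generalize hw : s ++ [σ] = w at h
    cases h with
    | nil => simp at hw
    | snoc s' σ' h1 h2 hen =>
      obtain ⟨hs, hσ⟩ := List.append_inj' hw rfl
      obtain rfl := hs
      obtain rfl : σ = σ' := by simpa using hσ
      exact hen
  have hnil : ([] : List α) ∈ K := by
    obtain ⟨k, hk⟩ := hKne
    exact hK k hk [] List.nil_prefix
  -- if σ ∈ η t and σ is in some solving supervisor's output at t (or unctrl), contradiction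
  have hη_not : ∀ (T : List α → Set α),
      {s : List α | LargeLang LG Euc Eca Φ T s} = K →
      ∀ t σ, σ ∈ T t → σ ∉ η t := by
    intro T hT t σ hσT hσ
    rw [hη] at hσ
    obtain ⟨s', hs', ht', hlg', hns'⟩ := hσ
    exact hns' (hstepG T hT s' hs' σ hlg' (Or.inr ⟨t, ht', hσT⟩))
  -- L(SCA) ⊆ K
  have hsub : ∀ s, LargeLang LG Euc Eca Φ SCA s → s ∈ K := by
    intro s hls
    induction hls with
    | nil => exact hnil
    | snoc s σ hls hlg hen ih =>
      rcases hen with h | ⟨t, ht, hσ⟩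
      · exact hstep s ih σ hlg (Or.inl h)
      · have htU : t ∈ ⋃ s ∈ K, Φ s := Set.mem_biUnion ih ht
        rw [hSCA t, if_pos htU] at hσ
        rcases hσ with hσ | hσ
        · rw [hη] at hσ
          by_contra hns
          exact hσ ⟨s, ih, ht, hlg, hns⟩
        · exact hstep s ih σ hlg (Or.inl (Or.inl hσ))
  -- K ⊆ L(SCA)
  have hsup : ∀ s ∈ K, LargeLang LG Euc Eca Φ SCA s := by
    intro s
    induction s using List.reverseRecOn with
    | nil => intro _; exact LargeLang.nil
    | append_singleton s σ ih =>
      intro hsK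
      have hsK' : s ∈ K := hK _ hsK s ⟨[σ], rfl⟩
      have hlg : s ++ [σ] ∈ LG := hKL hsK
      refine LargeLang.snoc s σ (ih hsK') hlg ?_
      have hS' : LargeLang LG Euc Eca Φ S (s ++ [σ]) :=
        (Set.ext_iff.mp hS _).mpr hsK
      rcases inv S s σ hS' with h | ⟨t, ht, hσ⟩
      · exact Or.inl h
      · refine Or.inr ⟨t, ht, ?_⟩
        have htU : t ∈ ⋃ u ∈ K, Φ u := Set.mem_biUnion hsK' ht
        rw [hSCA t, if_pos htU]
        exact Or.inl (hη_not S hS t σ hσ)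
  constructor
  · ext s
    exact ⟨hsub s, hsup s⟩
  · intro S' hS' t htU σ hσ
    rw [hSCA t, if_pos htU]
    exact Or.inl (hη_not S' hS' t σ hσ)
end
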